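/- Let N ≥ 3 be an integer, 0 < α < N−1, and f_α(x) = (N−1) g_α(|x|)/|x| on B₁(0)∖{0} ⊂ ℝ^N. Then for every t > 0 one has t · (Lebesgue measure of {x ∈ B₁(0) : x ≠ 0 and |f_α(x)| > t})^{1/N} ≤ (N−1) ω_N^{1/N}, where ω_N is the Lebesgue volume of the unit ball of ℝ^N. -/
import Mathlib


open MeasureTheory

/-- The profile `g_α` of the datum of the extremal example. -/
noncomputable def gAlpha (N : ℕ) (α r : ℝ) : ℝ :=
  α * r ^ (-α - 1) * (α ^ 2 * r ^ (-2 * α - 2) - (α + 2 - N) / ((N : ℝ) - 1)) /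
    (1 + α ^ 2 * r ^ (-2 * α - 2)) ^ ((3 : ℝ) / 2)

/-- The datum `f_α(x) = (N−1) g_α(|x|)/|x|` of the extremal example. -/
noncomputable def fAlpha (N : ℕ) (α : ℝ) (x : EuclideanSpace ℝ (Fin N)) : ℝ :=
  ((N : ℝ) - 1) * gAlpha N α ‖x‖ / ‖x‖

lemma abs_gAlpha_le_one (N : ℕ) (hN : 3 ≤ N) (α : ℝ) (hα : 0 < α)
    (hαN : α < (N : ℝ) - 1) {r : ℝ} (hr : 0 < r) : |gAlpha N α r| ≤ 1 := by
  have hN3 : (3 : ℝ) ≤ N := by exact_mod_cast hN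
  set s : ℝ := α * r ^ (-α - 1) with hs
  have hs0 : 0 ≤ s := mul_nonneg hα.le (Real.rpow_nonneg hr.le _)
  have hsq : α ^ 2 * r ^ (-2 * α - 2) = s ^ 2 := by
    rw [hs, mul_pow, show (-2 * α - 2 : ℝ) = (-α - 1) * 2 by ring,
      ← Real.rpow_natCast (r ^ (-α - 1)) 2, ← Real.rpow_mul hr.le]
    norm_num
  set c : ℝ := (α + 2 - N) / ((N : ℝ) - 1) with hc
  have hc1 : -1 ≤ c := by
    rw [hc, le_div_iff₀ (by linarith)]; linarith
  have hc2 : c ≤ 1 := by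
    rw [hc, div_le_one (by linarith)]; linarith
  set q : ℝ := Real.sqrt (1 + s ^ 2) with hq
  have hq0 : 0 ≤ q := Real.sqrt_nonneg _
  have hq2 : q ^ 2 = 1 + s ^ 2 := Real.sq_sqrt (by positivity)
  have hsq' : s ≤ q := by nlinarith [sq_nonneg (q - s), sq_nonneg (q + s)]
  have hnum : |s * (s ^ 2 - c)| ≤ q ^ 3 := by
    rw [abs_le]
    constructor <;> nlinarith [mul_le_mul_of_nonneg_right hsq' (by nlinarith : (0:ℝ) ≤ q ^ 2),
      mul_nonneg hs0 hq0]
  have hden : (1 + s ^ 2) ^ ((3 : ℝ) / 2) = q ^ 3 := by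
    rw [hq, Real.sqrt_eq_rpow, ← Real.rpow_natCast ((1 + s^2) ^ ((1:ℝ)/2)) 3,
      ← Real.rpow_mul (by positivity)]
    norm_num
  have hg : gAlpha N α r = s * (s ^ 2 - c) / q ^ 3 := by
    rw [gAlpha, hsq, ← hc, ← hs, hden]
  have hqpos : 0 < q := by nlinarith
  rw [hg, abs_div, abs_of_nonneg (by positivity : (0:ℝ) ≤ q ^ 3),
    div_le_one (by positivity)]
  exact hnum

/-- For `N ≥ 3`, `0 < α < N−1` and every `t > 0`,
`t·|{x ∈ B₁(0), x ≠ 0 : |f_α(x)| > t}|^{1/N} ≤ (N−1) ω_N^{1/N}`. -/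
theorem fAlpha_weak_LN_upper_bound (N : ℕ) (hN : 3 ≤ N) (α : ℝ) (hα : 0 < α)
    (hαN : α < (N : ℝ) - 1) (t : ℝ) (ht : 0 < t) :
    t * (volume {x : EuclideanSpace ℝ (Fin N) |
        x ∈ Metric.ball (0 : EuclideanSpace ℝ (Fin N)) 1 ∧ x ≠ 0 ∧
          t < |fAlpha N α x|}).toReal ^ ((1 : ℝ) / N) ≤
      ((N : ℝ) - 1) *
        (volume (Metric.ball (0 : EuclideanSpace ℝ (Fin N)) 1)).toReal ^ ((1 : ℝ) / N) := by
  have hN3 : (3 : ℝ) ≤ N := by exact_mod_cast hN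
  have hN1 : (0 : ℝ) < (N : ℝ) - 1 := by linarith
  set R : ℝ := min 1 (((N : ℝ) - 1) / t) with hR
  have hR0 : 0 < R := lt_min one_pos (div_pos hN1 ht)
  have hsub : {x : EuclideanSpace ℝ (Fin N) |
      x ∈ Metric.ball (0 : EuclideanSpace ℝ (Fin N)) 1 ∧ x ≠ 0 ∧ t < |fAlpha N α x|}
      ⊆ Metric.ball (0 : EuclideanSpace ℝ (Fin N)) R := by
    rintro x ⟨hx1, hx0, hxt⟩
    have hxn : 0 < ‖x‖ := norm_pos_iff.mpr hx0
    have hxlt1 : ‖x‖ < 1 := by simpa [mem_ball_zero_iff] using hx1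
    have hg := abs_gAlpha_le_one N hN α hα hαN hxn
    have hf : |fAlpha N α x| ≤ ((N : ℝ) - 1) / ‖x‖ := by
      rw [fAlpha, abs_div, abs_mul, abs_of_pos hxn, abs_of_pos hN1]
      calc ((N : ℝ) - 1) * |gAlpha N α ‖x‖| / ‖x‖ ≤ ((N : ℝ) - 1) * 1 / ‖x‖ := by gcongr
        _ = ((N : ℝ) - 1) / ‖x‖ := by ring
    have h1 : t < ((N : ℝ) - 1) / ‖x‖ := lt_of_lt_of_le hxt hf
    have hx2 : ‖x‖ < ((N : ℝ) - 1) / t := by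
      rw [lt_div_iff₀ ht]
      rw [lt_div_iff₀ hxn] at h1
      linarith [h1]
    exact mem_ball_zero_iff.mpr (lt_min hxlt1 hx2)
  haveI : Nontrivial (EuclideanSpace ℝ (Fin N)) :=
    Module.nontrivial_of_finrank_pos (R := ℝ)
      (by simp only [finrank_euclideanSpace, Fintype.card_fin]; omega)
  have hμ := measure_mono (μ := (volume : Measure (EuclideanSpace ℝ (Fin N)))) hsub
  rw [Measure.addHaar_ball volume (0 : EuclideanSpace ℝ (Fin N)) hR0.le] at hμ
  simp only [finrank_euclideanSpace, Fintype.card_fin] at hμ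
  set ω : ℝ := (volume (Metric.ball (0 : EuclideanSpace ℝ (Fin N)) 1)).toReal with hω
  have hω0 : 0 ≤ ω := ENNReal.toReal_nonneg
  have hfin : volume (Metric.ball (0 : EuclideanSpace ℝ (Fin N)) 1) ≠ ⊤ :=
    measure_ball_lt_top.ne
  have hV : (volume {x : EuclideanSpace ℝ (Fin N) |
      x ∈ Metric.ball (0 : EuclideanSpace ℝ (Fin N)) 1 ∧ x ≠ 0 ∧
        t < |fAlpha N α x|}).toReal ≤ R ^ N * ω := by
    have := ENNReal.toReal_mono (ENNReal.mul_ne_top ENNReal.ofReal_ne_top hfin) hμ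
    rwa [ENNReal.toReal_mul, ENNReal.toReal_ofReal (by positivity)] at this
  have hNne : (N : ℝ) ≠ 0 := by positivity
  have hpow : (R ^ N * ω) ^ ((1 : ℝ) / N) = R * ω ^ ((1 : ℝ) / N) := by
    rw [Real.mul_rpow (by positivity) hω0, ← Real.rpow_natCast R N,
      ← Real.rpow_mul hR0.le, mul_one_div, div_self hNne, Real.rpow_one]
  have hmono : (volume {x : EuclideanSpace ℝ (Fin N) |
      x ∈ Metric.ball (0 : EuclideanSpace ℝ (Fin N)) 1 ∧ x ≠ 0 ∧
        t < |fAlpha N α x|}).toReal ^ ((1 : ℝ) / N) ≤ R * ω ^ ((1 : ℝ) / N) := by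
    rw [← hpow]
    exact Real.rpow_le_rpow ENNReal.toReal_nonneg hV (by positivity)
  have htR : t * R ≤ (N : ℝ) - 1 := by
    calc t * R ≤ t * (((N : ℝ) - 1) / t) :=
          mul_le_mul_of_nonneg_left (min_le_right _ _) ht.le
      _ = (N : ℝ) - 1 := by field_simp
  calc t * _ ≤ t * (R * ω ^ ((1 : ℝ) / N)) := mul_le_mul_of_nonneg_left hmono ht.le
    _ = (t * R) * ω ^ ((1 : ℝ) / N) := by ring
    _ ≤ ((N : ℝ) - 1) * ω ^ ((1 : ℝ) / N) :=
        mul_le_mul_of_nonneg_right htR (by positivity)
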